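/- Let S and A be finite nonempty types. Let π, π' : S → A → ℝ be policies, i.e., for every s ∈ S, π(s,·) and π'(s,·) are nonnegative and sum to 1 over A. Let P : S → A → S → ℝ be a transition function, i.e., for every s,a, P(s,a,·) is nonnegative and sums to 1 over S. Define the induced one-step state kernels K(s,s') = Σ_{a∈A} π(s,a)·P(s,a,s') and K'(s,s') = Σ_{a∈A} π'(s,a)·P(s,a,s'), and for c ≥ 1 define the abstracted (c-step) transition functions K^c and K'^c by iterated composition (K^1 = K and K^{n+1}(s,s'') = Σ_{s'} K(s,s')·K^n(s',s'')). Suppose ε ∈ [0,1] and the two policies are close in the sense that (1/2)·Σ_{a∈A} |π'(s,a) − π(s,a)| ≤ ε for every s ∈ S. Then for every c ≥ 1 and all s, s' ∈ S, |K'^c(s,s') − K^c(s,s')| ≤ 2εc. -/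
import Mathlib


open Finset

/-- `kpow K c` is the `c`-fold composition `K^c` of the kernel `K` (for `c ≥ 1`):
`K^1 = K` and `K^{n+1}(s, s'') = ∑ s', K(s, s') * K^n(s', s'')`. -/
noncomputable def kpow {S : Type*} [Fintype S] (K : S → S → ℝ) : ℕ → S → S → ℝ
  | 0 => fun _ _ => 0
  | 1 => K
  | n + 2 => fun s s'' => ∑ s', K s s' * kpow K (n + 1) s' s''

lemma kpow_succ {S : Type*} [Fintype S] (K : S → S → ℝ) (n : ℕ) (hn : 1 ≤ n)
    (s s'' : S) : kpow K (n + 1) s s'' = ∑ s', K s s' * kpow K n s' s'' := by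
  obtain ⟨m, rfl⟩ := Nat.exists_eq_add_of_le hn
  rw [show 1 + m + 1 = m + 2 by ring, show 1 + m = m + 1 by ring]
  rfl

lemma kpow_nonneg {S : Type*} [Fintype S] {K : S → S → ℝ}
    (hK : ∀ s s', 0 ≤ K s s') : ∀ n s s', 0 ≤ kpow K n s s'
  | 0, s, s' => le_refl 0
  | 1, s, s' => hK s s'
  | n + 2, s, s'' => Finset.sum_nonneg fun s' _ =>
      mul_nonneg (hK s s') (kpow_nonneg hK (n + 1) s' s'')

lemma kpow_rowsum {S : Type*} [Fintype S] {K : S → S → ℝ}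
    (hsum : ∀ s, ∑ s', K s s' = 1) : ∀ n, 1 ≤ n → ∀ s, ∑ s', kpow K n s s' = 1
  | 1, _, s => hsum s
  | n + 2, _, s => by
    have ih := kpow_rowsum hsum (n + 1) (by omega)
    show ∑ s'', ∑ s', K s s' * kpow K (n + 1) s' s'' = 1
    rw [Finset.sum_comm]
    simp_rw [← Finset.mul_sum]
    calc ∑ s', K s s' * ∑ s'', kpow K (n+1) s' s''
        = ∑ s', K s s' * 1 := by
          exact Finset.sum_congr rfl fun s' _ => by rw [ih s']
      _ = 1 := by simp [hsum s]

lemma kpow_le_one {S : Type*} [Fintype S] {K : S → S → ℝ}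
    (hK : ∀ s s', 0 ≤ K s s') (hsum : ∀ s, ∑ s', K s s' = 1)
    (n : ℕ) (hn : 1 ≤ n) (s s' : S) : kpow K n s s' ≤ 1 := by
  have := kpow_rowsum hsum n hn s
  calc kpow K n s s' ≤ ∑ t, kpow K n s t :=
        Finset.single_le_sum (fun t _ => kpow_nonneg hK n s t) (Finset.mem_univ s')
    _ = 1 := this

theorem abstracted_transition_pointwise_bound
    {S A : Type*} [Fintype S] [Nonempty S] [Fintype A] [Nonempty A]
    (π π' : S → A → ℝ)
    (hπ_nonneg : ∀ s a, 0 ≤ π s a) (hπ_sum : ∀ s, ∑ a, π s a = 1)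
    (hπ'_nonneg : ∀ s a, 0 ≤ π' s a) (hπ'_sum : ∀ s, ∑ a, π' s a = 1)
    (P : S → A → S → ℝ)
    (hP_nonneg : ∀ s a s', 0 ≤ P s a s') (hP_sum : ∀ s a, ∑ s', P s a s' = 1)
    (K K' : S → S → ℝ)
    (hK : ∀ s s', K s s' = ∑ a, π s a * P s a s')
    (hK' : ∀ s s', K' s s' = ∑ a, π' s a * P s a s')
    (ε : ℝ) (hε0 : 0 ≤ ε) (hε1 : ε ≤ 1)
    (hclose : ∀ s, (1 / 2) * ∑ a, |π' s a - π s a| ≤ ε) :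
    ∀ c : ℕ, 1 ≤ c → ∀ s s' : S,
      |kpow K' c s s' - kpow K c s s'| ≤ 2 * ε * c := by
  -- basic facts
  have hKnn : ∀ s s', 0 ≤ K s s' := fun s s' => by
    rw [hK]; exact Finset.sum_nonneg fun a _ => mul_nonneg (hπ_nonneg s a) (hP_nonneg s a s')
  have hK'nn : ∀ s s', 0 ≤ K' s s' := fun s s' => by
    rw [hK']; exact Finset.sum_nonneg fun a _ => mul_nonneg (hπ'_nonneg s a) (hP_nonneg s a s')
  have hKsum : ∀ s, ∑ s', K s s' = 1 := fun s => by
    simp_rw [hK]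
    rw [Finset.sum_comm]
    simp_rw [← Finset.mul_sum, hP_sum, mul_one, hπ_sum]
  have hK'sum : ∀ s, ∑ s', K' s s' = 1 := fun s => by
    simp_rw [hK']
    rw [Finset.sum_comm]
    simp_rw [← Finset.mul_sum, hP_sum, mul_one, hπ'_sum]
  -- TV bound on the one-step kernels, summed over target states
  have hTV : ∀ s, ∑ s', |K' s s' - K s s'| ≤ 2 * ε := by
    intro s
    have h1 : ∀ s', |K' s s' - K s s'| ≤ ∑ a, |π' s a - π s a| * P s a s' := by
      intro s'
      rw [hK, hK', ← Finset.sum_sub_distrib]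
      refine (Finset.abs_sum_le_sum_abs _ _).trans ?_
      refine Finset.sum_le_sum fun a _ => ?_
      rw [← sub_mul, abs_mul, abs_of_nonneg (hP_nonneg s a s')]
    calc ∑ s', |K' s s' - K s s'| ≤ ∑ s', ∑ a, |π' s a - π s a| * P s a s' :=
          Finset.sum_le_sum fun s' _ => h1 s'
      _ = ∑ a, |π' s a - π s a| := by
          rw [Finset.sum_comm]; simp_rw [← Finset.mul_sum, hP_sum, mul_one]
      _ ≤ 2 * ε := by linarith [hclose s]
  -- pointwise one-step bound
  have h1 : ∀ s s', |K' s s' - K s s'| ≤ 2 * ε := by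
    intro s s'
    calc |K' s s' - K s s'| ≤ ∑ t, |K' s t - K s t| :=
          Finset.single_le_sum (f := fun t => |K' s t - K s t|)
            (fun t _ => abs_nonneg _) (Finset.mem_univ s')
      _ ≤ 2 * ε := hTV s
  -- induction
  intro c
  induction c with
  | zero => omega
  | succ n ih =>
    intro _ s s''
    rcases Nat.eq_zero_or_pos n with rfl | hn
    · show |K' s s'' - K s s''| ≤ _
      have := h1 s s''
      push_cast
      linarith
    ·
      rw [kpow_succ K' n hn, kpow_succ K n hn]
      have key : ∑ s', K' s s' * kpow K' n s' s'' - ∑ s', K s s' * kpow K n s' s''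
          = ∑ s', ((K' s s' - K s s') * kpow K' n s' s''
              + K s s' * (kpow K' n s' s'' - kpow K n s' s'')) := by
        rw [← Finset.sum_sub_distrib]
        exact Finset.sum_congr rfl fun s' _ => by ring
      rw [key]
      refine (Finset.abs_sum_le_sum_abs _ _).trans ?_
      have hbound : ∀ s' : S, |(K' s s' - K s s') * kpow K' n s' s''
            + K s s' * (kpow K' n s' s'' - kpow K n s' s'')|
          ≤ |K' s s' - K s s'| + K s s' * (2 * ε * n) := by
        intro s'
        refine (abs_add_le _ _).trans (add_le_add ?_ ?_)
        · rw [abs_mul, abs_of_nonneg (kpow_nonneg hK'nn n s' s'')]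
          exact mul_le_of_le_one_right (abs_nonneg _) (kpow_le_one hK'nn hK'sum n hn s' s'')
        · rw [abs_mul, abs_of_nonneg (hKnn s s')]
          exact mul_le_mul_of_nonneg_left (ih hn s' s'') (hKnn s s')
      calc ∑ s', |(K' s s' - K s s') * kpow K' n s' s''
              + K s s' * (kpow K' n s' s'' - kpow K n s' s'')|
          ≤ ∑ s', (|K' s s' - K s s'| + K s s' * (2 * ε * n)) :=
            Finset.sum_le_sum fun s' _ => hbound s'
        _ = (∑ s', |K' s s' - K s s'|) + (2 * ε * n) := by
            rw [Finset.sum_add_distrib, ← Finset.sum_mul, hKsum, one_mul]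
        _ ≤ 2 * ε + 2 * ε * n := by linarith [hTV s]
        _ = 2 * ε * (n + 1 : ℕ) := by push_cast; ring
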